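/- Let T : H → H be nonexpansive with Fix T nonempty and let x_{k+1} := α_k v + (1 − α_k) T(x_k) with α_k ∈ (0,1), α_k → 0, Σ α_k = +∞. If in addition Σ_{k≥0} |α_{k+1} − α_k| < +∞, then ‖x_k − T(x_k)‖ → 0 and x_k converges strongly to P_{Fix T}(v). -/

import Mathlib

open Filter Topology RealInnerProductSpace

private lemma halpern_numeric (a c α b : ℕ → ℝ) (ha : ∀ k, 0 ≤ a k)
    (hα : ∀ k, α k ∈ Set.Ioo (0:ℝ) 1) (hαs : ¬ Summable α)
    (hb : ∀ k, 0 ≤ b k) (hbs : Summable b)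
    (hc : ∀ ε > 0, ∀ᶠ k in atTop, c k ≤ ε)
    (hrec : ∀ k, a (k+1) ≤ (1 - α k) * a k + α k * c k + b k) :
    Tendsto a atTop (nhds 0) := by
  rw [Metric.tendsto_atTop]
  intro ε hε
  set δ := ε/4 with hδdef
  have hδ : 0 < δ := by positivity
  obtain ⟨N₁, hN₁⟩ := (hc δ hδ).exists_forall_of_atTop
  have hcs : CauchySeq (fun n => ∑ i ∈ Finset.range n, b i) := hbs.hasSum.tendsto_sum_nat.cauchySeq
  obtain ⟨N₂, hN₂⟩ := Metric.cauchySeq_iff'.1 hcs (δ/2) (by positivity)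
  set N := max N₁ N₂ with hN
  have hbt : ∀ m, ∑ i ∈ Finset.range m, b (N + i) ≤ δ := by
    intro m
    have h1 := hN₂ (N + m) (le_trans (le_max_right _ _) (Nat.le_add_right _ _))
    have h4 := hN₂ N (le_max_right _ _)
    have h2 : ∑ i ∈ Finset.range (N + m), b i
        = ∑ i ∈ Finset.range N, b i + ∑ i ∈ Finset.range m, b (N + i) :=
      Finset.sum_range_add b N m
    rw [Real.dist_eq] at h1 h4
    have h5 : ∑ i ∈ Finset.range (N+m), b i - ∑ i ∈ Finset.range N₂, b i < δ/2 :=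
      lt_of_le_of_lt (le_abs_self _) h1
    have h6 : ∑ i ∈ Finset.range N₂, b i - ∑ i ∈ Finset.range N, b i < δ/2 :=
      lt_of_le_of_lt (le_abs_self _) (by rwa [abs_sub_comm])
    linarith
  set Q : ℕ → ℝ := fun m => ∏ i ∈ Finset.range m, (1 - α (N + i)) with hQ
  have hQnn : ∀ m, 0 ≤ Q m := fun m =>
    Finset.prod_nonneg (fun i _ => by have := (hα (N+i)).2; linarith)
  have hQ1 : ∀ m, Q m ≤ 1 := fun m =>
    Finset.prod_le_one (fun i _ => by have := (hα (N+i)).2; linarith)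
      (fun i _ => by have := (hα (N+i)).1; linarith)
  have main : ∀ m, a (N + m) ≤ Q m * a N + δ * (1 - Q m) + ∑ i ∈ Finset.range m, b (N + i) := by
    intro m
    induction m with
    | zero => simp [hQ]
    | succ m ih =>
      have hrecm := hrec (N + m)
      have hcm : c (N + m) ≤ δ := hN₁ (N + m) (le_trans (le_max_left _ _) (Nat.le_add_right _ _))
      have hαm := hα (N + m)
      have h1 : a (N + (m+1)) ≤ (1 - α (N+m)) * a (N+m) + α (N+m) * δ + b (N+m) := by
        have he : N + (m+1) = (N + m) + 1 := by ring
        rw [he]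
        refine hrecm.trans ?_
        have : α (N+m) * c (N+m) ≤ α (N+m) * δ :=
          mul_le_mul_of_nonneg_left hcm (le_of_lt hαm.1)
        linarith
      have hQs : Q (m+1) = Q m * (1 - α (N+m)) := by
        simp only [hQ, Finset.prod_range_succ]
      have h2 : (1 - α (N+m)) * a (N+m) ≤ (1 - α (N+m)) * (Q m * a N + δ * (1 - Q m) + ∑ i ∈ Finset.range m, b (N + i)) :=
        mul_le_mul_of_nonneg_left ih (by linarith [hαm.2])
      rw [Finset.sum_range_succ, hQs]
      have hbnn : (0:ℝ) ≤ ∑ i ∈ Finset.range m, b (N+i) :=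
        Finset.sum_nonneg (fun i _ => hb (N+i))
      nlinarith [h1, h2, mul_nonneg (le_of_lt hαm.1) hbnn, hαm.1, hαm.2, hQnn m, hδ.le]
  have hQ0 : Tendsto Q atTop (nhds 0) := by
    have hαnn : ∀ i, 0 ≤ α (N + i) := fun i => le_of_lt (hα (N+i)).1
    have hdiv : ¬ Summable (fun i => α (N + i)) := by
      intro hs
      exact hαs (((summable_nat_add_iff N).1 (by simpa [Nat.add_comm] using hs)))
    have hsum : Tendsto (fun m => ∑ i ∈ Finset.range m, α (N + i)) atTop atTop :=
      (not_summable_iff_tendsto_nat_atTop_of_nonneg hαnn).1 hdiv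
    have hexp : Tendsto (fun m => Real.exp (-(∑ i ∈ Finset.range m, α (N + i)))) atTop (nhds 0) :=
      Real.tendsto_exp_atBot.comp (tendsto_neg_atTop_atBot.comp hsum)
    refine squeeze_zero hQnn (fun m => ?_) hexp
    calc Q m ≤ ∏ i ∈ Finset.range m, Real.exp (-(α (N + i))) := by
          refine Finset.prod_le_prod (fun i _ => by have := (hα (N+i)).2; linarith) (fun i _ => ?_)
          have := Real.add_one_le_exp (-(α (N+i))); linarith
      _ = Real.exp (-(∑ i ∈ Finset.range m, α (N + i))) := by
          rw [← Real.exp_sum]; congr 1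
          exact Finset.sum_neg_distrib (s := Finset.range m) (f := fun i => α (N + i))
  obtain ⟨M₀, hM₀⟩ := Metric.tendsto_atTop.1 hQ0 (δ / (a N + 1)) (div_pos hδ (by linarith [ha N]))
  refine ⟨N + M₀, fun n hn => ?_⟩
  obtain ⟨m, rfl⟩ := Nat.exists_eq_add_of_le hn
  have hQm := hM₀ (M₀ + m) (Nat.le_add_right _ _)
  rw [Real.dist_eq, sub_zero, abs_of_nonneg (hQnn _)] at hQm
  have hQa : Q (M₀ + m) * a N ≤ δ := by
    have h1 : Q (M₀ + m) * a N ≤ (δ / (a N + 1)) * a N :=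
      mul_le_mul_of_nonneg_right (le_of_lt hQm) (ha N)
    have h2 : (δ / (a N + 1)) * a N ≤ δ := by
      rw [div_mul_eq_mul_div, div_le_iff₀ (by linarith [ha N])]
      nlinarith [ha N]
    linarith
  have hmain := main (M₀ + m)
  have hN' : N + M₀ + m = N + (M₀ + m) := by ring
  rw [hN', Real.dist_eq, sub_zero, abs_of_nonneg (ha _)]
  have hbt' := hbt (M₀ + m)
  have h7 := hQnn (M₀ + m)
  have h8 := hQ1 (M₀ + m)
  nlinarith [ha (N + (M₀ + m))]

private lemma halpern_key {H : Type*} [NormedAddCommGroup H] [InnerProductSpace ℝ H]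
    [CompleteSpace H]
    (T : H → H) (hT : ∀ x y : H, ‖T x - T y‖ ≤ ‖x - y‖)
    (y : ℕ → H) (M : ℝ) (hy : ∀ k, ‖y k‖ ≤ M)
    (hreg : Tendsto (fun k => ‖y k - T (y k)‖) atTop (nhds 0))
    (v ξ : H) (hproj : ∀ w, T w = w → ⟪v - ξ, w - ξ⟫ ≤ 0) :
    ∀ ε > 0, ∀ᶠ k in atTop, ⟪v - ξ, y k - ξ⟫ ≤ ε := by
  intro ε hε
  by_contra hcon
  rw [Filter.not_eventually] at hcon
  have hne : (atTop ⊓ 𝓟 {k | ¬ (⟪v - ξ, y k - ξ⟫ ≤ ε)}).NeBot :=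
    Filter.frequently_iff_neBot.1 hcon
  haveI := hne
  obtain ⟨U, hU⟩ := Filter.exists_ultrafilter_le (atTop ⊓ 𝓟 {k | ¬ (⟪v - ξ, y k - ξ⟫ ≤ ε)})
  have hUa : (U : Filter ℕ) ≤ atTop := hU.trans inf_le_left
  have hUs : {k | ¬ (⟪v - ξ, y k - ξ⟫ ≤ ε)} ∈ U :=
    (hU.trans inf_le_right) (Filter.mem_principal_self _)
  have hM0 : 0 ≤ M := le_trans (norm_nonneg _) (hy 0)
  -- ultrafilter weak limit
  have hex : ∀ u : H, ∃ r : ℝ, Tendsto (fun k => ⟪y k, u⟫) (U : Filter ℕ) (nhds r) := by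
    intro u
    have hmem : ↑(U.map (fun k => ⟪y k, u⟫)) ≤ 𝓟 (Set.Icc (-(M*‖u‖)) (M*‖u‖)) := by
      refine Filter.le_principal_iff.2 (Filter.mem_map.2 (Filter.univ_mem' fun k => ?_))
      have h1 := abs_real_inner_le_norm (y k) u
      have h2 : ‖y k‖ * ‖u‖ ≤ M * ‖u‖ := mul_le_mul_of_nonneg_right (hy k) (norm_nonneg u)
      have := abs_le.1 (h1.trans h2)
      exact ⟨this.1, this.2⟩
    obtain ⟨r, _, hler⟩ := isCompact_Icc.ultrafilter_le_nhds (U.map fun k => ⟪y k, u⟫) hmem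
    exact ⟨r, by rwa [Ultrafilter.coe_map] at hler⟩
  choose φ hφ using hex
  have hadd : ∀ u w : H, φ (u + w) = φ u + φ w := fun u w =>
    tendsto_nhds_unique (hφ (u+w)) (by simpa [inner_add_right] using ((hφ u).add (hφ w)))
  have hsmul : ∀ (c : ℝ) (u : H), φ (c • u) = c * φ u := fun c u =>
    tendsto_nhds_unique (hφ (c • u)) (by simpa [inner_smul_right] using ((hφ u).const_mul c))
  have hbd : ∀ u : H, ‖φ u‖ ≤ M * ‖u‖ := by
    intro u
    rw [Real.norm_eq_abs]
    refine le_of_tendsto (hφ u).abs (Filter.Eventually.of_forall fun k => ?_)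
    exact (abs_real_inner_le_norm (y k) u).trans
      (mul_le_mul_of_nonneg_right (hy k) (norm_nonneg u))
  let lin : H →ₗ[ℝ] ℝ :=
    { toFun := φ, map_add' := hadd, map_smul' := hsmul }
  let L : H →L[ℝ] ℝ := LinearMap.mkContinuous lin M hbd
  set w := (InnerProductSpace.toDual ℝ H).symm L with hwdef
  have hw : ∀ u : H, ⟪w, u⟫ = φ u := fun u => InnerProductSpace.toDual_symm_apply
  have hweak : ∀ u : H, Tendsto (fun k => ⟪y k, u⟫) (U : Filter ℕ) (nhds ⟪w, u⟫) := fun u =>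
    (hw u) ▸ hφ u
  -- w is a fixed point (demiclosedness)
  set h : H := w - T w with hhdef
  have hregU : Tendsto (fun k => ‖y k - T (y k)‖) (U : Filter ℕ) (nhds 0) :=
    hreg.mono_left hUa
  have hptwise : ∀ k, ‖h‖^2 ≤ -2 * ⟪y k - w, h⟫
      + ‖y k - T (y k)‖ * (2*(M + ‖w‖) + ‖y k - T (y k)‖) := by
    intro k
    have e1 : ‖y k - T w‖ ≤ ‖y k - T (y k)‖ + ‖y k - w‖ := by
      calc ‖y k - T w‖ ≤ ‖y k - T (y k)‖ + ‖T (y k) - T w‖ := by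
            have := norm_add_le (y k - T (y k)) (T (y k) - T w)
            simpa using this
        _ ≤ ‖y k - T (y k)‖ + ‖y k - w‖ := by linarith [hT (y k) w]
    have e2 : ‖y k - T w‖^2 = ‖y k - w‖^2 + 2*⟪y k - w, h⟫ + ‖h‖^2 := by
      have hsplit : y k - T w = (y k - w) + h := by rw [hhdef]; abel
      rw [hsplit, norm_add_sq_real]
    have e3 : ‖y k - w‖ ≤ M + ‖w‖ := (norm_sub_le _ _).trans (by linarith [hy k])
    nlinarith [norm_nonneg (y k - T w), norm_nonneg (y k - T (y k)), norm_nonneg (y k - w),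
      norm_nonneg w]
  have hRHS : Tendsto (fun k => -2 * ⟪y k - w, h⟫
      + ‖y k - T (y k)‖ * (2*(M + ‖w‖) + ‖y k - T (y k)‖)) (U : Filter ℕ) (nhds 0) := by
    have t1 : Tendsto (fun k => ⟪y k - w, h⟫) (U : Filter ℕ) (nhds 0) := by
      have := (hweak h).sub_const ⟪w, h⟫
      simpa [inner_sub_left] using this
    have t2 := ((t1.const_mul (-2)).add
      (hregU.mul ((hregU.const_add (2*(M + ‖w‖))))))
    simpa using t2
  have hh0 : ‖h‖^2 ≤ 0 := ge_of_tendsto hRHS (Filter.Eventually.of_forall hptwise)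
  have hfixw : T w = w := by
    have : ‖h‖ = 0 := by nlinarith [norm_nonneg h]
    have : h = 0 := norm_eq_zero.1 this
    rw [hhdef] at this
    exact (sub_eq_zero.1 this).symm
  -- contradiction
  have h1 : Tendsto (fun k => ⟪v - ξ, y k - ξ⟫) (U : Filter ℕ) (nhds ⟪v - ξ, w - ξ⟫) := by
    have heq : ∀ k, ⟪v - ξ, y k - ξ⟫ = ⟪y k, v - ξ⟫ - ⟪v - ξ, ξ⟫ := fun k => by
      rw [inner_sub_right, real_inner_comm]
    simp only [heq]
    have := (hweak (v - ξ)).sub_const ⟪v - ξ, ξ⟫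
    have heq2 : ⟪w, v - ξ⟫ - ⟪v - ξ, ξ⟫ = ⟪v - ξ, w - ξ⟫ := by
      rw [real_inner_comm, ← inner_sub_right]
    rwa [heq2] at this
  have h2 : ε ≤ ⟪v - ξ, w - ξ⟫ := by
    refine ge_of_tendsto h1 (Filter.mem_of_superset hUs fun k hk => ?_)
    exact le_of_lt (lt_of_not_ge hk)
  have := hproj w hfixw
  linarith

set_option maxHeartbeats 1000000 in
theorem stmt7 {H : Type*} [NormedAddCommGroup H] [InnerProductSpace ℝ H] [CompleteSpace H]
    (T : H → H) (hT : ∀ x y : H, ‖T x - T y‖ ≤ ‖x - y‖)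
    (hfix : (Function.fixedPoints T).Nonempty)
    (v : H) (α : ℕ → ℝ) (hα : ∀ k, α k ∈ Set.Ioo (0:ℝ) 1)
    (hα0 : Tendsto α atTop (nhds 0)) (hαs : ¬ Summable α)
    (hαd : Summable (fun k => |α (k+1) - α k|))
    (x : ℕ → H) (hx : ∀ k, x (k+1) = α k • v + (1 - α k) • T (x k)) :
    Tendsto (fun k => ‖x k - T (x k)‖) atTop (nhds 0) ∧
    ∃ ξ ∈ Function.fixedPoints T,
      (∀ w ∈ Function.fixedPoints T, ‖v - ξ‖ ≤ ‖v - w‖) ∧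
      Tendsto x atTop (nhds ξ) := by
  obtain ⟨p₀, hp₀⟩ := hfix
  have hp₀' : T p₀ = p₀ := hp₀
  set R := max ‖x 0 - p₀‖ ‖v - p₀‖ with hR
  have hR0 : 0 ≤ R := le_trans (norm_nonneg _) (le_max_left _ _)
  have hvp : ‖v - p₀‖ ≤ R := le_max_right _ _
  -- boundedness
  have hbd : ∀ k, ‖x k - p₀‖ ≤ R := by
    intro k
    induction k with
    | zero => exact le_max_left _ _
    | succ k ih =>
      have hsplit : x (k+1) - p₀ = α k • (v - p₀) + (1 - α k) • (T (x k) - p₀) := by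
        rw [hx k]; module
      have hTxk : ‖T (x k) - p₀‖ ≤ R := by
        calc ‖T (x k) - p₀‖ = ‖T (x k) - T p₀‖ := by rw [hp₀']
          _ ≤ ‖x k - p₀‖ := hT _ _
          _ ≤ R := ih
      have hαk := hα k
      calc ‖x (k+1) - p₀‖ ≤ ‖α k • (v - p₀)‖ + ‖(1 - α k) • (T (x k) - p₀)‖ := by
            rw [hsplit]; exact norm_add_le _ _
        _ = α k * ‖v - p₀‖ + (1 - α k) * ‖T (x k) - p₀‖ := by
            rw [norm_smul, norm_smul, Real.norm_eq_abs, Real.norm_eq_abs,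
              abs_of_pos hαk.1, abs_of_pos (by linarith [hαk.2] : (0:ℝ) < 1 - α k)]
        _ ≤ α k * R + (1 - α k) * R := by
            have h1 := mul_le_mul_of_nonneg_left hvp (le_of_lt hαk.1)
            have h2 := mul_le_mul_of_nonneg_left hTxk (by linarith [hαk.2] : (0:ℝ) ≤ 1 - α k)
            linarith
        _ = R := by ring
  have hxb : ∀ k, ‖x k‖ ≤ R + ‖p₀‖ := by
    intro k
    calc ‖x k‖ = ‖(x k - p₀) + p₀‖ := by rw [sub_add_cancel]
      _ ≤ ‖x k - p₀‖ + ‖p₀‖ := norm_add_le _ _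
      _ ≤ R + ‖p₀‖ := by linarith [hbd k]
  have hvT : ∀ k, ‖v - T (x k)‖ ≤ 2 * R := by
    intro k
    have h1 : ‖p₀ - T (x k)‖ ≤ R := by
      rw [norm_sub_rev]
      calc ‖T (x k) - p₀‖ = ‖T (x k) - T p₀‖ := by rw [hp₀']
        _ ≤ ‖x k - p₀‖ := hT _ _
        _ ≤ R := hbd k
    calc ‖v - T (x k)‖ = ‖(v - p₀) + (p₀ - T (x k))‖ := by rw [sub_add_sub_cancel]
      _ ≤ ‖v - p₀‖ + ‖p₀ - T (x k)‖ := norm_add_le _ _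
      _ ≤ 2 * R := by linarith
  -- differences tend to zero
  set d := fun k => ‖x (k+1) - x k‖ with hd
  have hdrec : ∀ k, d (k+1) ≤ (1 - α (k+1)) * d k + α (k+1) * 0 + 2*R*|α (k+1) - α k| := by
    intro k
    have hsplit : x (k+2) - x (k+1)
        = (α (k+1) - α k) • (v - T (x k)) + (1 - α (k+1)) • (T (x (k+1)) - T (x k)) := by
      rw [hx (k+1), hx k]; module
    have hαk := hα (k+1)
    calc d (k+1) = ‖x (k+2) - x (k+1)‖ := rfl
      _ ≤ ‖(α (k+1) - α k) • (v - T (x k))‖ + ‖(1 - α (k+1)) • (T (x (k+1)) - T (x k))‖ := by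
          rw [hsplit]; exact norm_add_le _ _
      _ = |α (k+1) - α k| * ‖v - T (x k)‖ + (1 - α (k+1)) * ‖T (x (k+1)) - T (x k)‖ := by
          rw [norm_smul, norm_smul, Real.norm_eq_abs, Real.norm_eq_abs,
            abs_of_pos (by linarith [hαk.2] : (0:ℝ) < 1 - α (k+1))]
      _ ≤ |α (k+1) - α k| * (2*R) + (1 - α (k+1)) * d k := by
          have h1 := mul_le_mul_of_nonneg_left (hvT k) (abs_nonneg (α (k+1) - α k))
          have h2 : ‖T (x (k+1)) - T (x k)‖ ≤ d k := hT _ _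
          have h3 := mul_le_mul_of_nonneg_left h2 (by linarith [hαk.2] : (0:ℝ) ≤ 1 - α (k+1))
          linarith
      _ = (1 - α (k+1)) * d k + α (k+1) * 0 + 2*R*|α (k+1) - α k| := by ring
  have hd0 : Tendsto d atTop (nhds 0) := by
    refine halpern_numeric d (fun _ => 0) (fun k => α (k+1)) (fun k => 2*R*|α (k+1) - α k|)
      (fun k => norm_nonneg _) (fun k => hα (k+1)) ?_ (fun k => by positivity)
      (hαd.mul_left (2*R)) (fun ε hε => Filter.Eventually.of_forall fun k => le_of_lt hε) hdrec
    exact fun hs => hαs ((summable_nat_add_iff 1).1 hs)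
  -- first conclusion
  have hfxT : Tendsto (fun k => ‖x k - T (x k)‖) atTop (nhds 0) := by
    have hpt : ∀ k, ‖x k - T (x k)‖ ≤ d k + α k * (2*R) := by
      intro k
      have hsplit : x k - T (x k) = (x k - x (k+1)) + α k • (v - T (x k)) := by
        rw [hx k]; module
      calc ‖x k - T (x k)‖ ≤ ‖x k - x (k+1)‖ + ‖α k • (v - T (x k))‖ := by
            rw [hsplit]; exact norm_add_le _ _
        _ = d k + α k * ‖v - T (x k)‖ := by
            rw [norm_sub_rev, norm_smul, Real.norm_eq_abs, abs_of_pos (hα k).1]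
        _ ≤ d k + α k * (2*R) := by
            have := mul_le_mul_of_nonneg_left (hvT k) (le_of_lt (hα k).1)
            linarith
    have hlim : Tendsto (fun k => d k + α k * (2*R)) atTop (nhds 0) := by
      have := hd0.add (hα0.mul_const (2*R))
      simpa using this
    exact squeeze_zero (fun k => norm_nonneg _) hpt hlim
  -- Fix T is closed and convex
  have hclosed : IsClosed (Function.fixedPoints T) := by
    have hcont : Continuous T := by
      have hl : LipschitzWith 1 T := LipschitzWith.of_dist_le_mul (fun a b => by
        rw [dist_eq_norm, dist_eq_norm]; simpa using hT a b)
      exact hl.continuous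
    exact isClosed_eq hcont continuous_id
  have hconv : Convex ℝ (Function.fixedPoints T) := by
    intro p hp q hq a b ha hb hab
    have hp' : T p = p := hp
    have hq' : T q = q := hq
    set m := a • p + b • q with hm
    set h : H := T m - m with hh
    have e1 : ‖T m - p‖ ≤ ‖m - p‖ := by
      calc ‖T m - p‖ = ‖T m - T p‖ := by rw [hp']
        _ ≤ ‖m - p‖ := hT _ _
    have e2 : ‖T m - q‖ ≤ ‖m - q‖ := by
      calc ‖T m - q‖ = ‖T m - T q‖ := by rw [hq']
        _ ≤ ‖m - q‖ := hT _ _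
    have d1 : 2*⟪m - p, h⟫ + ‖h‖^2 ≤ 0 := by
      have hs : T m - p = (m - p) + h := by rw [hh]; abel
      have := norm_add_sq_real (m - p) h
      rw [← hs] at this
      nlinarith [norm_nonneg (T m - p), norm_nonneg (m - p)]
    have d2 : 2*⟪m - q, h⟫ + ‖h‖^2 ≤ 0 := by
      have hs : T m - q = (m - q) + h := by rw [hh]; abel
      have := norm_add_sq_real (m - q) h
      rw [← hs] at this
      nlinarith [norm_nonneg (T m - q), norm_nonneg (m - q)]
    have hmp : m - p = b • (q - p) := by
      rw [hm, show a = 1 - b from by linarith]; module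
    have hmq : m - q = a • (p - q) := by
      rw [hm, show b = 1 - a from by linarith]; module
    have i1 : ⟪m - p, h⟫ = b * ⟪q - p, h⟫ := by rw [hmp, real_inner_smul_left]
    have i2 : ⟪m - q, h⟫ = -(a * ⟪q - p, h⟫) := by
      rw [hmq, real_inner_smul_left, show p - q = -(q - p) from by abel, inner_neg_left]
      ring
    have hh2 : ‖h‖^2 ≤ 0 := by nlinarith [d1, d2, ha, hb]
    have : h = 0 := norm_eq_zero.1 (by nlinarith [norm_nonneg h])
    have : T m = m := by rw [hh] at this; exact sub_eq_zero.1 this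
    exact this
  -- projection of v on Fix T
  obtain ⟨ξ, hξmem, hξmin⟩ :=
    exists_norm_eq_iInf_of_complete_convex ⟨p₀, hp₀⟩ hclosed.isComplete hconv v
  have hproj : ∀ w ∈ Function.fixedPoints T, ⟪v - ξ, w - ξ⟫ ≤ 0 :=
    (norm_eq_iInf_iff_real_inner_le_zero hconv hξmem).1 hξmin
  have hmin : ∀ w ∈ Function.fixedPoints T, ‖v - ξ‖ ≤ ‖v - w‖ := by
    intro w hw
    rw [hξmin]
    exact ciInf_le ⟨0, by rintro r ⟨w', rfl⟩; exact norm_nonneg _⟩ (⟨w, hw⟩ : (Function.fixedPoints T))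
  have hξfix : T ξ = ξ := hξmem
  -- key limsup estimate
  have hkey : ∀ ε > 0, ∀ᶠ k in atTop, ⟪v - ξ, x (k+1) - ξ⟫ ≤ ε := by
    refine halpern_key T hT (fun k => x (k+1)) (R + ‖p₀‖) (fun k => hxb (k+1)) ?_ v ξ
      (fun w hw => hproj w hw)
    exact hfxT.comp (tendsto_add_atTop_nat 1)
  -- final recursion on ‖x k - ξ‖²
  set A := fun k => ‖x k - ξ‖^2 with hA
  have hArec : ∀ k, A (k+1) ≤ (1 - α k) * A k + α k * (2*⟪v - ξ, x (k+1) - ξ⟫) + 0 := by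
    intro k
    have hαk := hα k
    have hsplit : x (k+1) - ξ = (1 - α k) • (T (x k) - ξ) + α k • (v - ξ) := by
      rw [hx k]; module
    have hid := norm_add_sq_real ((1 - α k) • (T (x k) - ξ)) (α k • (v - ξ))
    rw [← hsplit] at hid
    have hAv : ‖(1 - α k) • (T (x k) - ξ)‖ = (1 - α k) * ‖T (x k) - ξ‖ := by
      rw [norm_smul, Real.norm_eq_abs, abs_of_pos (by linarith [hαk.2] : (0:ℝ) < 1 - α k)]
    have hTle : ‖T (x k) - ξ‖ ≤ ‖x k - ξ‖ := by
      calc ‖T (x k) - ξ‖ = ‖T (x k) - T ξ‖ := by rw [hξfix]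
        _ ≤ ‖x k - ξ‖ := hT _ _
    have hip : ⟪(1 - α k) • (T (x k) - ξ), α k • (v - ξ)⟫
        = α k * ⟪v - ξ, x (k+1) - ξ⟫ - α k * ⟪v - ξ, α k • (v - ξ)⟫ := by
      have h1 : ⟪α k • (v - ξ), x (k+1) - ξ⟫
          = ⟪α k • (v - ξ), (1 - α k) • (T (x k) - ξ)⟫ + ⟪α k • (v - ξ), α k • (v - ξ)⟫ := by
        rw [hsplit, inner_add_right]
      have h2 : ⟪α k • (v - ξ), x (k+1) - ξ⟫ = α k * ⟪v - ξ, x (k+1) - ξ⟫ :=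
        real_inner_smul_left _ _ _
      have h3 : ⟪α k • (v - ξ), α k • (v - ξ)⟫ = α k * ⟪v - ξ, α k • (v - ξ)⟫ :=
        real_inner_smul_left _ _ _
      have h4 : ⟪(1 - α k) • (T (x k) - ξ), α k • (v - ξ)⟫
          = ⟪α k • (v - ξ), (1 - α k) • (T (x k) - ξ)⟫ := real_inner_comm _ _
      rw [h4]; linarith [h1, h2, h3]
    have hB2 : ‖α k • (v - ξ)‖^2 = ⟪v - ξ, α k • (v - ξ)⟫ * α k := by
      rw [← real_inner_self_eq_norm_sq, real_inner_smul_left]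
      ring
    have hsq : ((1 - α k) * ‖T (x k) - ξ‖)^2 ≤ (1 - α k) * ‖x k - ξ‖^2 := by
      have h5 : ‖T (x k) - ξ‖^2 ≤ ‖x k - ξ‖^2 := by
        nlinarith [norm_nonneg (T (x k) - ξ), norm_nonneg (x k - ξ)]
      have h6 : (0:ℝ) ≤ 1 - α k := by linarith [hαk.2]
      have h7 := mul_le_mul_of_nonneg_left h5 h6
      nlinarith [hαk.1, hαk.2, mul_nonneg (mul_nonneg h6 (sq_nonneg ‖T (x k) - ξ‖)) hαk.1.le]
    rw [hA]
    simp only [add_zero]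
    rw [hAv] at hid
    nlinarith [hid, hip, hB2, hsq]
  have hA0 : Tendsto A atTop (nhds 0) := by
    refine halpern_numeric A (fun k => 2*⟪v - ξ, x (k+1) - ξ⟫) α (fun _ => 0)
      (fun k => sq_nonneg _) hα hαs (fun k => le_refl 0) summable_zero ?_ hArec
    intro ε hε
    refine (hkey (ε/2) (by positivity)).mono fun k hk => ?_
    show 2 * ⟪v - ξ, x (k+1) - ξ⟫ ≤ ε
    linarith
  have hxlim : Tendsto x atTop (nhds ξ) := by
    rw [tendsto_iff_norm_sub_tendsto_zero]
    have heq : (fun k => ‖x k - ξ‖) = fun k => Real.sqrt (A k) :=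
      funext fun k => (Real.sqrt_sq (norm_nonneg _)).symm
    rw [heq]
    have := (Real.continuous_sqrt.tendsto 0).comp hA0
    simpa [Real.sqrt_zero, Function.comp_def] using this
  exact ⟨hfxT, ξ, hξmem, hmin, hxlim⟩
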